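/- arXiv:2411.08456 — 2 statements merged into one kernel-verified Lean document; each statement's English description precedes it below -/
import Mathlib

section
/- Let G : [0,1] → [0,∞) be a concave function with ∫_0^1 G(x) dx = 1. Then ∫_0^1 G(x)² dx ≤ 4/3, with 4/3 = ∫_0^1 (2x)² dx being the value attained by the linear function G(x) = 2x. -/
open Set

open MeasureTheory intervalIntegral


noncomputable def tauAux (η : ℝ → ℝ) (p q y : ℝ) : ℝ :=
  sSup {x | x ∈ Set.Icc p q ∧ y ≤ η x}

lemma layer (η w : ℝ → ℝ) (p q : ℝ) (hpq : p ≤ q)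
    (hη : Continuous η) (hw : Continuous w)
    (hmono : ∀ x₁ ∈ Icc p q, ∀ x₂ ∈ Icc p q, x₁ ≤ x₂ → η x₂ ≤ η x₁)
    (h0 : ∀ x ∈ Icc p q, 0 ≤ η x) :
    ∫ x in p..q, (∫ y in (0:ℝ)..(η x), w y) =
      ∫ y in (0:ℝ)..(η p), w y * (tauAux η p q y - p) := by
  have hpmem : p ∈ Icc p q := ⟨le_rfl, hpq⟩
  set a := η p with ha
  have ha0 : (0:ℝ) ≤ a := h0 p hpmem
  -- bound for w on [0,a]
  obtain ⟨C, hC⟩ := (isCompact_Icc (a := (0:ℝ)) (b := a)).exists_bound_of_continuousOn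
    hw.continuousOn
  have hC0 : 0 ≤ C := le_trans (norm_nonneg _) (hC 0 ⟨le_rfl, ha0⟩)
  set f : ℝ → ℝ → ℝ := fun x y => if y ≤ η x then w y else 0 with hf
  have hrange : ∀ x ∈ Icc p q, η x ∈ Icc 0 a := fun x hx => ⟨h0 x hx, hmono p hpmem x hx hx.1⟩
  -- measurability
  have hSclosed : IsClosed {z : ℝ × ℝ | z.2 ≤ η z.1} :=
    isClosed_le continuous_snd (hη.comp continuous_fst)
  have huncurry : Function.uncurry f = Set.indicator {z : ℝ × ℝ | z.2 ≤ η z.1}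
      (fun z => w z.2) := by
    funext z
    by_cases h : z.2 ≤ η z.1 <;>
      simp [Function.uncurry, hf, Set.indicator_apply, h]
  haveI h1 : IsFiniteMeasure (volume.restrict (Ioc p q)) := by
    constructor
    rw [Measure.restrict_apply_univ, Real.volume_Ioc]
    exact ENNReal.ofReal_lt_top
  haveI h2 : IsFiniteMeasure (volume.restrict (Ioc 0 a)) := by
    constructor
    rw [Measure.restrict_apply_univ, Real.volume_Ioc]
    exact ENNReal.ofReal_lt_top
  have hmeas : AEStronglyMeasurable (Function.uncurry f)
      ((volume.restrict (Ioc p q)).prod (volume.restrict (Ioc 0 a))) := by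
    rw [huncurry]
    exact (((hw.comp continuous_snd).measurable).indicator
      hSclosed.measurableSet).aestronglyMeasurable
  have hbound : ∀ᵐ z ∂((volume.restrict (Ioc p q)).prod (volume.restrict (Ioc 0 a))),
      ‖Function.uncurry f z‖ ≤ C := by
    rw [Measure.prod_restrict]
    refine (ae_restrict_iff' (measurableSet_Ioc.prod measurableSet_Ioc)).2
      (Filter.Eventually.of_forall ?_)
    rintro ⟨x, y⟩ hz
    have hy : y ∈ Ioc (0:ℝ) a := hz.2
    simp only [Function.uncurry, hf]
    split
    · exact hC y ⟨hy.1.le, hy.2⟩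
    · simpa using hC0
  have hint : Integrable (Function.uncurry f)
      ((volume.restrict (Ioc p q)).prod (volume.restrict (Ioc 0 a))) :=
    Integrable.mono' (integrable_const C) hmeas hbound
  have hswap := MeasureTheory.integral_integral_swap hint
  -- LHS: inner integral computes to ∫_0^{η x} w
  have hL : ∀ x ∈ Ioc p q, (∫ y in Ioc 0 a, f x y) = ∫ y in (0:ℝ)..(η x), w y := by
    intro x hx
    have hxI : x ∈ Icc p q := Ioc_subset_Icc_self hx
    have hηx := hrange x hxI
    have heq : (fun y => f x y) = (Iic (η x)).indicator w := by
      funext y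
      by_cases h : y ≤ η x <;> simp [hf, Set.indicator_apply, mem_Iic, h]
    rw [heq, setIntegral_indicator measurableSet_Iic]
    have hseteq : Ioc (0:ℝ) a ∩ Iic (η x) = Ioc 0 (η x) := by
      ext y
      simp only [mem_inter_iff, mem_Ioc, mem_Iic]
      constructor
      · rintro ⟨⟨hy0, _⟩, hyx⟩; exact ⟨hy0, hyx⟩
      · rintro ⟨hy0, hyx⟩; exact ⟨⟨hy0, hyx.trans hηx.2⟩, hyx⟩
    rw [hseteq, intervalIntegral.integral_of_le hηx.1]
  -- RHS: inner integral computes to w y * (τ y - p)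
  have hR : ∀ y ∈ Ioc (0:ℝ) a, (∫ x in Ioc p q, f x y) = w y * (tauAux η p q y - p) := by
    intro y hy
    have hSbdd : BddAbove {x | x ∈ Icc p q ∧ y ≤ η x} := ⟨q, fun x hx => hx.1.2⟩
    have hSne : {x | x ∈ Icc p q ∧ y ≤ η x}.Nonempty := ⟨p, hpmem, hy.2⟩
    have hSclosed' : IsClosed {x | x ∈ Icc p q ∧ y ≤ η x} := by
      have : {x | x ∈ Icc p q ∧ y ≤ η x} = Icc p q ∩ {x | y ≤ η x} := rfl
      rw [this]
      exact isClosed_Icc.inter (isClosed_le continuous_const hη)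
    have hτS : tauAux η p q y ∈ {x | x ∈ Icc p q ∧ y ≤ η x} :=
      hSclosed'.csSup_mem hSne hSbdd
    obtain ⟨hτmem, hτy⟩ := hτS
    have hset : Ioc p q ∩ {x | y ≤ η x} = Ioc p (tauAux η p q y) := by
      ext x
      simp only [mem_inter_iff, mem_Ioc, mem_setOf_eq]
      constructor
      · rintro ⟨⟨hpx, hxq⟩, hyx⟩
        exact ⟨hpx, le_csSup hSbdd ⟨⟨hpx.le, hxq⟩, hyx⟩⟩
      · rintro ⟨hpx, hxτ⟩
        have hxI : x ∈ Icc p q := ⟨hpx.le, hxτ.trans hτmem.2⟩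
        exact ⟨⟨hpx, hxI.2⟩, le_trans hτy (hmono x hxI _ hτmem hxτ)⟩
    have heq : (fun x => f x y) = Set.indicator {x | y ≤ η x} (fun _ => w y) := by
      funext x
      by_cases h : y ≤ η x <;> simp [hf, Set.indicator_apply, h]
    rw [heq, setIntegral_indicator (isClosed_le continuous_const hη).measurableSet, hset,
      setIntegral_const, measureReal_def, Real.volume_Ioc, ENNReal.toReal_ofReal (sub_nonneg.2 hτmem.1),
      smul_eq_mul, mul_comm]
  calc ∫ x in p..q, (∫ y in (0:ℝ)..(η x), w y)
      = ∫ x in Ioc p q, (∫ y in (0:ℝ)..(η x), w y) := intervalIntegral.integral_of_le hpq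
    _ = ∫ x in Ioc p q, (∫ y in Ioc 0 a, f x y) :=
        (setIntegral_congr_fun measurableSet_Ioc (fun x hx => (hL x hx).symm))
    _ = ∫ y in Ioc 0 a, (∫ x in Ioc p q, f x y) := hswap
    _ = ∫ y in Ioc 0 a, w y * (tauAux η p q y - p) :=
        setIntegral_congr_fun measurableSet_Ioc hR
    _ = ∫ y in (0:ℝ)..a, w y * (tauAux η p q y - p) :=
        (intervalIntegral.integral_of_le ha0).symm

lemma conv_anti (η : ℝ → ℝ) (p q : ℝ) (hcv : ConvexOn ℝ (Icc p q) η)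
    (h0 : ∀ x ∈ Icc p q, 0 ≤ η x) (hq : η q = 0) :
    ∀ x₁ ∈ Icc p q, ∀ x₂ ∈ Icc p q, x₁ ≤ x₂ → η x₂ ≤ η x₁ := by
  intro x₁ h₁ x₂ h₂ h12
  rcases eq_or_lt_of_le h12 with rfl | hlt
  · exact le_rfl
  rcases eq_or_lt_of_le h₂.2 with rfl | hx2q
  · rw [hq]; exact h0 x₁ h₁
  have hq1 : (0:ℝ) < q - x₁ := by linarith [h₂.2]
  set t := (q - x₂) / (q - x₁) with htdef
  have ht0 : 0 ≤ t := div_nonneg (by linarith) hq1.le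
  have ht1 : t ≤ 1 := by
    rw [htdef, div_le_one hq1]; linarith
  have hqmem : q ∈ Icc p q := ⟨h₁.1.trans (by linarith [h₂.2]), le_rfl⟩
  have hcomb := hcv.2 h₁ hqmem ht0 (by linarith : (0:ℝ) ≤ 1 - t) (by ring)
  have hpt : t • x₁ + (1 - t) • q = x₂ := by
    simp only [smul_eq_mul, htdef]
    field_simp
    ring
  rw [hpt] at hcomb
  have : η x₂ ≤ t * η x₁ + (1 - t) * η q := by
    simpa [smul_eq_mul] using hcomb
  rw [hq] at this
  nlinarith [h0 x₁ h₁]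

set_option maxHeartbeats 1000000 in
lemma core (η : ℝ → ℝ) (p q : ℝ) (hpq : p ≤ q) (hη : Continuous η)
    (hcv : ConvexOn ℝ (Icc p q) η) (h0 : ∀ x ∈ Icc p q, 0 ≤ η x) (hq : η q = 0) :
    3 * ∫ x in p..q, (η x) ^ 2 ≤ 2 * η p * ∫ x in p..q, η x := by
  rcases eq_or_lt_of_le hpq with rfl | hpq'
  · simp
  have hmono := conv_anti η p q hcv h0 hq
  have hpmem : p ∈ Icc p q := ⟨le_rfl, hpq⟩
  have hqmem : q ∈ Icc p q := ⟨hpq, le_rfl⟩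
  obtain ⟨a, ha⟩ : ∃ a : ℝ, η p = a := ⟨η p, rfl⟩
  have ha0 : (0:ℝ) ≤ a := ha ▸ h0 p hpmem
  rcases eq_or_lt_of_le ha0 with ha' | hapos
  · -- a = 0 : η vanishes on [p,q]
    have hzero : ∀ x ∈ Icc p q, η x = 0 := fun x hx =>
      le_antisymm ((hmono p hpmem x hx hx.1).trans (by rw [ha, ← ha'])) (h0 x hx)
    have h1 : ∫ x in p..q, (η x) ^ 2 = 0 := by
      rw [intervalIntegral.integral_congr (g := fun _ => (0:ℝ))
        (fun x hx => by rw [uIcc_of_le hpq] at hx; rw [hzero x hx]; ring)]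
      simp
    have h2 : ∫ x in p..q, η x = 0 := by
      rw [intervalIntegral.integral_congr (g := fun _ => (0:ℝ))
        (fun x hx => by rw [uIcc_of_le hpq] at hx; exact hzero x hx)]
      simp
    rw [h1, h2]; simp
  -- main case a > 0
  have hIVT := intermediate_value_Icc' hpq hη.continuousOn
  have hmem3 : a / 3 ∈ Icc (η q) (η p) := by
    rw [hq, ha]; constructor <;> [linarith; linarith]
  obtain ⟨x₀, hx₀mem, hx₀⟩ := hIVT hmem3
  have hpx₀ : p < x₀ := by
    rcases eq_or_lt_of_le hx₀mem.1 with h | h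
    · exfalso; rw [← h, ha] at hx₀; linarith
    · exact h
  have hx₀q : x₀ ≤ q := hx₀mem.2
  obtain ⟨e, he0, hx₀e⟩ : ∃ e : ℝ, 0 < e ∧ x₀ = p + e :=
    ⟨x₀ - p, by linarith, by ring⟩
  -- chord inequality on [p, x₀]
  have chord : ∀ x ∈ Icc p x₀, e * η x ≤ e * a - (2 * a / 3) * (x - p) := by
    intro x hx
    have hxmem : x ∈ Icc p q := ⟨hx.1, hx.2.trans hx₀q⟩
    have ht0 : 0 ≤ (x₀ - x) / e := div_nonneg (by linarith [hx.2]) he0.le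
    have ht1 : (x₀ - x) / e ≤ 1 := by
      rw [div_le_one he0, hx₀e]; linarith [hx.1]
    have hcomb := hcv.2 hpmem hx₀mem ht0 (by linarith : (0:ℝ) ≤ 1 - (x₀ - x) / e) (by ring)
    have hpt : ((x₀ - x) / e) • p + (1 - (x₀ - x) / e) • x₀ = x := by
      simp only [smul_eq_mul]
      rw [hx₀e]
      field_simp
      ring
    rw [hpt, ha, hx₀] at hcomb
    simp only [smul_eq_mul] at hcomb
    have h4 : e * η x ≤ e * ((x₀ - x) / e * a + (1 - (x₀ - x) / e) * (a / 3)) :=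
      mul_le_mul_of_nonneg_left hcomb he0.le
    have h5 : e * ((x₀ - x) / e * a + (1 - (x₀ - x) / e) * (a / 3)) =
        e * a - (2 * a / 3) * (x - p) := by
      rw [hx₀e]
      field_simp
      ring
    linarith [h5 ▸ h4]
  -- secant inequality on [x₀, q]
  have secant : ∀ z ∈ Icc x₀ q, e * a - (2 * a / 3) * (z - p) ≤ e * η z := by
    intro z hz
    rcases eq_or_lt_of_le hz.1 with h | hlt
    · rw [← h, hx₀, hx₀e]
      apply le_of_eq; ring
    have hzmem : z ∈ Icc p q := ⟨(hpx₀.trans hlt).le, hz.2⟩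
    have hzp : (0:ℝ) < z - p := by linarith [hpx₀]
    have ht0 : 0 ≤ (z - x₀) / (z - p) := div_nonneg (by linarith) hzp.le
    have ht1 : (z - x₀) / (z - p) ≤ 1 := by rw [div_le_one hzp]; linarith
    have hcomb := hcv.2 hpmem hzmem ht0
      (by linarith : (0:ℝ) ≤ 1 - (z - x₀) / (z - p)) (by ring)
    have hpt : ((z - x₀) / (z - p)) • p + (1 - (z - x₀) / (z - p)) • z = x₀ := by
      simp only [smul_eq_mul]
      field_simp
      ring
    rw [hpt, ha, hx₀] at hcomb
    simp only [smul_eq_mul] at hcomb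
    have h4 : (z - p) * (a / 3) ≤
        (z - p) * ((z - x₀) / (z - p) * a + (1 - (z - x₀) / (z - p)) * η z) :=
      mul_le_mul_of_nonneg_left hcomb hzp.le
    have h5 : (z - p) * ((z - x₀) / (z - p) * a + (1 - (z - x₀) / (z - p)) * η z) =
        (z - x₀) * a + (x₀ - p) * η z := by
      field_simp
      ring
    have h6 : e * a - (2 * a / 3) * (z - p) = (z - p) * (a / 3) - (z - x₀) * a := by
      rw [hx₀e]; ring
    have h7 : (x₀ - p) = e := by rw [hx₀e]; ring
    rw [h6]
    rw [h7] at h5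
    linarith [h4.trans_eq h5]
  have hqbound : e * a - (2 * a / 3) * (q - p) ≤ 0 := by
    have := secant q ⟨hx₀q, le_rfl⟩
    rw [hq] at this; linarith
  have h2a : (0:ℝ) < 2 * a := by linarith
  -- facts about τ
  have hSbdd : ∀ y : ℝ, BddAbove {x | x ∈ Icc p q ∧ y ≤ η x} :=
    fun y => ⟨q, fun x hx => hx.1.2⟩
  have hSne : ∀ y ≤ a, {x | x ∈ Icc p q ∧ y ≤ η x}.Nonempty :=
    fun y hy => ⟨p, hpmem, by rw [ha]; exact hy⟩
  have hτmem : ∀ y ≤ a, tauAux η p q y ∈ Icc p q ∧ y ≤ η (tauAux η p q y) := by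
    intro y hy
    have hSclosed' : IsClosed {x | x ∈ Icc p q ∧ y ≤ η x} := by
      have : {x | x ∈ Icc p q ∧ y ≤ η x} = Icc p q ∩ {x | y ≤ η x} := rfl
      rw [this]; exact isClosed_Icc.inter (isClosed_le continuous_const hη)
    exact hSclosed'.csSup_mem (hSne y hy) (hSbdd y)
  -- C1
  have hC1 : ∀ y ∈ Icc (0:ℝ) a, y ≤ a / 3 →
      3 * (a - y) * e / (2 * a) ≤ tauAux η p q y - p := by
    intro y hy hy3
    have hLnn : 0 ≤ 3 * (a - y) * e / (2 * a) := by
      apply div_nonneg _ h2a.le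
      nlinarith [hy.2, he0]
    have hLe : e ≤ 3 * (a - y) * e / (2 * a) := by
      rw [le_div_iff₀ h2a]
      nlinarith [mul_nonneg he0.le (by linarith : (0:ℝ) ≤ a - 3 * y)]
    have hLq : p + 3 * (a - y) * e / (2 * a) ≤ q := by
      have hnum : 3 * (a - y) * e ≤ (q - p) * (2 * a) := by
        nlinarith [hqbound, mul_nonneg (mul_nonneg hy.1 he0.le) (by norm_num : (0:ℝ) ≤ 3)]
      have := (div_le_iff₀ h2a).2 hnum
      linarith
    have hx₀le : x₀ ≤ p + 3 * (a - y) * e / (2 * a) := by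
      rw [hx₀e]; linarith
    have hsec := secant (p + 3 * (a - y) * e / (2 * a)) ⟨hx₀le, hLq⟩
    have h9 : e * a - 2 * a / 3 * (p + 3 * (a - y) * e / (2 * a) - p) = e * y := by
      field_simp
      ring
    rw [h9] at hsec
    have hηz : y ≤ η (p + 3 * (a - y) * e / (2 * a)) := le_of_mul_le_mul_left hsec he0
    have hmem : p + 3 * (a - y) * e / (2 * a) ∈ Icc p q := ⟨by linarith, hLq⟩
    have := le_csSup (hSbdd y) (Set.mem_sep hmem hηz)
    unfold tauAux
    linarith
  -- C2
  have hC2 : ∀ y ∈ Icc (0:ℝ) a, a / 3 < y →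
      tauAux η p q y - p ≤ 3 * (a - y) * e / (2 * a) := by
    intro y hy hy3
    have hupper : tauAux η p q y ≤ p + 3 * (a - y) * e / (2 * a) := by
      apply csSup_le (hSne y hy.2)
      intro x hx
      obtain ⟨hxI, hyx⟩ := hx
      have hxx₀ : x ≤ x₀ := by
        by_contra hcon
        push_neg at hcon
        have := hmono x₀ hx₀mem x hxI hcon.le
        rw [hx₀] at this
        linarith
      have hch := chord x ⟨hxI.1, hxx₀⟩
      have h5 : (2 * a / 3) * (x - p) ≤ e * (a - y) := by
        nlinarith [mul_le_mul_of_nonneg_left hyx he0.le]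
      have h6 : x - p ≤ 3 * (a - y) * e / (2 * a) := by
        rw [le_div_iff₀ h2a]
        nlinarith [h5]
      linarith
    linarith
  -- τ antitone, integrable
  have hτanti : AntitoneOn (tauAux η p q) (Icc (0:ℝ) a) := by
    intro y₁ _ y₂ hy₂ h12
    apply csSup_le_csSup (hSbdd y₁) (hSne y₂ hy₂.2)
    intro x hx
    exact ⟨hx.1, h12.trans hx.2⟩
  have hτint : IntervalIntegrable (tauAux η p q) volume 0 a := by
    apply AntitoneOn.intervalIntegrable
    rw [uIcc_of_le ha0]
    exact hτanti
  have hτsub : IntervalIntegrable (fun y => tauAux η p q y - p) volume 0 a :=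
    hτint.sub intervalIntegrable_const
  have hcont1 : ContinuousOn (fun y : ℝ => 2 * y) (uIcc 0 a) := by fun_prop
  have hcont2 : ContinuousOn (fun y : ℝ => 6 * y - 2 * a) (uIcc 0 a) := by fun_prop
  have hint1 : IntervalIntegrable (fun y => 2 * y * (tauAux η p q y - p)) volume 0 a :=
    hτsub.continuousOn_mul hcont1
  have hint2 : IntervalIntegrable (fun y => (6 * y - 2 * a) * (tauAux η p q y - p)) volume 0 a :=
    hτsub.continuousOn_mul hcont2
  have hcontL : Continuous (fun y : ℝ => (6 * y - 2 * a) * (3 * (a - y) * e / (2 * a))) := by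
    fun_prop
  have hintL : IntervalIntegrable (fun y : ℝ => (6 * y - 2 * a) * (3 * (a - y) * e / (2 * a)))
      volume 0 a := hcontL.intervalIntegrable 0 a
  -- A and B via layer
  have hW2 : ∀ t : ℝ, (∫ y in (0:ℝ)..t, 2 * y) = t ^ 2 := by
    intro t
    rw [intervalIntegral.integral_const_mul, integral_id]
    ring
  have hA : (∫ x in p..q, (η x) ^ 2) = ∫ y in (0:ℝ)..a, (2 * y) * (tauAux η p q y - p) := by
    have h1 := layer η (fun y => 2 * y) p q hpq hη (by fun_prop) hmono h0
    rw [ha] at h1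
    have h2 : (∫ x in p..q, (η x) ^ 2) = ∫ x in p..q, (∫ y in (0:ℝ)..(η x), 2 * y) :=
      intervalIntegral.integral_congr (fun x _ => (hW2 (η x)).symm)
    rw [h2, h1]
  have hB : (∫ x in p..q, η x) = ∫ y in (0:ℝ)..a, (tauAux η p q y - p) := by
    have h1 := layer η (fun _ => (1:ℝ)) p q hpq hη continuous_const hmono h0
    rw [ha] at h1
    have h2 : (∫ x in p..q, η x) = ∫ x in p..q, (∫ y in (0:ℝ)..(η x), (1:ℝ)) :=
      intervalIntegral.integral_congr (fun x _ => by simp)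
    rw [h2, h1]
    exact intervalIntegral.integral_congr (fun y _ => by simp)
  -- the key comparison
  have hcompare : (∫ y in (0:ℝ)..a, (6 * y - 2 * a) * (tauAux η p q y - p)) ≤
      ∫ y in (0:ℝ)..a, (6 * y - 2 * a) * (3 * (a - y) * e / (2 * a)) := by
    apply intervalIntegral.integral_mono_on ha0 hint2 hintL
    intro y hy
    rcases le_or_gt y (a / 3) with h | h
    · have hfac : 6 * y - 2 * a ≤ 0 := by linarith
      have := hC1 y hy h
      nlinarith
    · have hfac : 0 ≤ 6 * y - 2 * a := by linarith
      have := hC2 y hy h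
      nlinarith
  have hzero : (∫ y in (0:ℝ)..a, (6 * y - 2 * a) * (3 * (a - y) * e / (2 * a))) = 0 := by
    have heq : ∀ y : ℝ, (6 * y - 2 * a) * (3 * (a - y) * e / (2 * a)) =
        (3 * e / (2 * a)) * (8 * a * y - 6 * y ^ 2 - 2 * a ^ 2) := by
      intro y; field_simp; ring
    rw [intervalIntegral.integral_congr (fun y _ => heq y),
      intervalIntegral.integral_const_mul]
    have hi1 : IntervalIntegrable (fun y : ℝ => 8 * a * y - 6 * y ^ 2) volume 0 a :=
      (by fun_prop : Continuous fun y : ℝ => 8 * a * y - 6 * y ^ 2).intervalIntegrable 0 a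
    have hi2 : IntervalIntegrable (fun _ : ℝ => 2 * a ^ 2) volume 0 a :=
      intervalIntegrable_const
    have hi3 : IntervalIntegrable (fun y : ℝ => 8 * a * y) volume 0 a :=
      (by fun_prop : Continuous fun y : ℝ => 8 * a * y).intervalIntegrable 0 a
    have hi4 : IntervalIntegrable (fun y : ℝ => 6 * y ^ 2) volume 0 a :=
      (by fun_prop : Continuous fun y : ℝ => 6 * y ^ 2).intervalIntegrable 0 a
    have hval : (∫ y in (0:ℝ)..a, (8 * a * y - 6 * y ^ 2 - 2 * a ^ 2)) = 0 := by
      rw [show (fun y : ℝ => 8 * a * y - 6 * y ^ 2 - 2 * a ^ 2) =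
          (fun y : ℝ => (8 * a * y - 6 * y ^ 2) - 2 * a ^ 2) from rfl,
        intervalIntegral.integral_sub hi1 hi2,
        intervalIntegral.integral_sub hi3 hi4,
        intervalIntegral.integral_const_mul, intervalIntegral.integral_const_mul,
        integral_id, integral_pow, intervalIntegral.integral_const]
      push_cast
      simp [smul_eq_mul]
      ring
    rw [hval]; ring
  have hlin : (∫ y in (0:ℝ)..a, (6 * y - 2 * a) * (tauAux η p q y - p)) =
      3 * (∫ y in (0:ℝ)..a, (2 * y) * (tauAux η p q y - p)) -
        2 * a * (∫ y in (0:ℝ)..a, (tauAux η p q y - p)) := by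
    have heq : ∀ y : ℝ, (6 * y - 2 * a) * (tauAux η p q y - p) =
        3 * (2 * y * (tauAux η p q y - p)) - 2 * a * (tauAux η p q y - p) := fun y => by ring
    rw [intervalIntegral.integral_congr (fun y _ => heq y),
      intervalIntegral.integral_sub (hint1.const_mul 3) (hτsub.const_mul (2 * a)),
      intervalIntegral.integral_const_mul, intervalIntegral.integral_const_mul]
  rw [hA, hB, ha]
  have hfin := hcompare.trans_eq hzero
  rw [hlin] at hfin
  linarith

lemma onesided (f : ℝ → ℝ) (p q M : ℝ) (hpq : p ≤ q) (hf : Continuous f)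
    (hconc : ConcaveOn ℝ (Icc p q) f) (h0 : ∀ x ∈ Icc p q, 0 ≤ f x)
    (hM : ∀ x ∈ Icc p q, f x ≤ M) (hqM : f q = M) :
    3 * ∫ x in p..q, (f x) ^ 2 ≤ 4 * M * (∫ x in p..q, f x) - M ^ 2 * (q - p) := by
  have hcv : ConvexOn ℝ (Icc p q) (fun x => M - f x) := by
    have h := (convexOn_const (c := M) (convex_Icc p q)).add hconc.neg
    have hfun : (fun x => M - f x) = (fun x => M) + -f := by
      funext x
      simp [sub_eq_add_neg]
    rw [hfun]
    exact h
  have hcore := core (fun x => M - f x) p q hpq (by fun_prop) hcv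
    (fun x hx => by simp [hM x hx]) (by simp [hqM])
  have hfi : IntervalIntegrable f volume p q := hf.intervalIntegrable p q
  have hfi2 : IntervalIntegrable (fun x => (f x) ^ 2) volume p q :=
    (by fun_prop : Continuous fun x => (f x) ^ 2).intervalIntegrable p q
  have hfiM : IntervalIntegrable (fun x => 2 * M * f x) volume p q := hfi.const_mul _
  have hexp1 : (∫ x in p..q, (M - f x) ^ 2) =
      M ^ 2 * (q - p) - 2 * M * (∫ x in p..q, f x) + ∫ x in p..q, (f x) ^ 2 := by
    have heq : ∀ x : ℝ, (M - f x) ^ 2 = (M ^ 2 - 2 * M * f x) + (f x) ^ 2 := fun x => by ring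
    rw [intervalIntegral.integral_congr (fun x _ => heq x),
      intervalIntegral.integral_add ((_root_.intervalIntegrable_const).sub hfiM) hfi2,
      intervalIntegral.integral_sub _root_.intervalIntegrable_const hfiM,
      intervalIntegral.integral_const_mul, intervalIntegral.integral_const]
    simp [smul_eq_mul]
    ring
  have hexp2 : (∫ x in p..q, (M - f x)) = M * (q - p) - ∫ x in p..q, f x := by
    rw [intervalIntegral.integral_sub _root_.intervalIntegrable_const hfi,
      intervalIntegral.integral_const]
    simp [smul_eq_mul]
    ring
  rw [hexp1, hexp2] at hcore
  have hMp : M - f p ≤ M := by linarith [h0 p ⟨le_rfl, hpq⟩]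
  have hMp0 : 0 ≤ M - f p := by linarith [hM p ⟨le_rfl, hpq⟩]
  have hFM : (∫ x in p..q, f x) ≤ M * (q - p) := by
    have h := intervalIntegral.integral_mono_on hpq hfi _root_.intervalIntegrable_const hM
    rw [intervalIntegral.integral_const, smul_eq_mul] at h
    linarith [h]
  have hstep : 2 * (M - f p) * (M * (q - p) - ∫ x in p..q, f x) ≤
      2 * M * (M * (q - p) - ∫ x in p..q, f x) := by
    apply mul_le_mul_of_nonneg_right _ (by linarith)
    linarith
  nlinarith [hcore, hstep]

lemma middle (G : ℝ → ℝ) (hconc : ConcaveOn ℝ (Icc 0 1) G)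
    (hpos : ∀ x ∈ Icc (0:ℝ) 1, 0 ≤ G x)
    (u v : ℝ) (hu : 0 < u) (huv : u < v) (hv : v < 1)
    (hS1 : ∫ x in u..v, G x ≤ 1) :
    ∫ x in u..v, (G x) ^ 2 ≤ 4 / (3 * (v - u)) := by
  have hsub : Icc u v ⊆ Ioo 0 1 := fun x hx => ⟨hu.trans_le hx.1, lt_of_le_of_lt hx.2 hv⟩
  have hsub' : Icc u v ⊆ Icc 0 1 := hsub.trans Ioo_subset_Icc_self
  have hcont : ContinuousOn G (Icc u v) := by
    have h1 : ContinuousOn G (Ioo 0 1) := by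
      have := hconc.locallyLipschitzOn_interior.continuousOn
      rwa [interior_Icc] at this
    exact h1.mono hsub
  -- clamp
  set clamp : ℝ → ℝ := fun x => max u (min v x) with hclampdef
  have hclampcont : Continuous clamp := continuous_const.max (continuous_const.min continuous_id)
  have hclampmem : ∀ x, clamp x ∈ Icc u v :=
    fun x => ⟨le_max_left _ _, max_le huv.le (min_le_left _ _)⟩
  set Gc : ℝ → ℝ := fun x => G (clamp x) with hGcdef
  have hGcont : Continuous Gc := hcont.comp_continuous hclampcont hclampmem
  have hagree : ∀ x ∈ Icc u v, Gc x = G x := by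
    intro x hx
    have h1 : min v x = x := min_eq_right hx.2
    have h2 : max u x = x := max_eq_right hx.1
    simp only [hGcdef, hclampdef, h1, h2]
  have hGcconc : ConcaveOn ℝ (Icc u v) Gc := by
    refine ⟨convex_Icc u v, fun x hx y hy α β hα hβ hαβ => ?_⟩
    have hxy : α • x + β • y ∈ Icc u v := (convex_Icc u v) hx hy hα hβ hαβ
    rw [hagree _ hxy, hagree _ hx, hagree _ hy]
    exact (hconc.subset hsub' (convex_Icc u v)).2 hx hy hα hβ hαβ
  have hGc0 : ∀ x ∈ Icc u v, 0 ≤ Gc x := fun x hx => by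
    rw [hagree x hx]; exact hpos x (hsub' hx)
  -- maximum
  obtain ⟨c, hcmem, hcmax⟩ := isCompact_Icc.exists_isMaxOn (nonempty_Icc.2 huv.le)
    hGcont.continuousOn
  have hM : ∀ x ∈ Icc u v, Gc x ≤ Gc c := fun x hx => hcmax hx
  have hM0 : 0 ≤ Gc c := hGc0 c hcmem
  have huc : u ≤ c := hcmem.1
  have hcv' : c ≤ v := hcmem.2
  have hsubL : Icc u c ⊆ Icc u v := Icc_subset_Icc le_rfl hcv'
  have hsubR : Icc c v ⊆ Icc u v := Icc_subset_Icc huc le_rfl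
  -- left piece
  have hleft := onesided Gc u c (Gc c) huc hGcont
    (hGcconc.subset hsubL (convex_Icc u c))
    (fun x hx => hGc0 x (hsubL hx)) (fun x hx => hM x (hsubL hx)) rfl
  -- right piece via reflection
  set g : ℝ → ℝ := fun x => Gc (c + v - x) with hgdef
  have hgcont : Continuous g := hGcont.comp (continuous_const.sub continuous_id)
  have hrefl : ∀ x ∈ Icc c v, c + v - x ∈ Icc c v :=
    fun x hx => ⟨by linarith [hx.2], by linarith [hx.1]⟩
  have hgconc : ConcaveOn ℝ (Icc c v) g := by
    refine ⟨convex_Icc c v, fun x hx y hy α β hα hβ hαβ => ?_⟩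
    have hx' := hrefl x hx
    have hy' := hrefl y hy
    have hkey : c + v - (α • x + β • y) = α • (c + v - x) + β • (c + v - y) := by
      simp only [smul_eq_mul]
      have : α * (c + v) + β * (c + v) = c + v := by
        rw [← add_mul, hαβ]; ring
      linarith [this]
    simp only [hgdef]
    rw [hkey]
    exact (hGcconc.subset hsubR (convex_Icc c v)).2 hx' hy' hα hβ hαβ
  have hg0 : ∀ x ∈ Icc c v, 0 ≤ g x := fun x hx => hGc0 _ (hsubR (hrefl x hx))
  have hgM : ∀ x ∈ Icc c v, g x ≤ Gc c := fun x hx => hM _ (hsubR (hrefl x hx))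
  have hgv : g v = Gc c := by simp only [hgdef]; norm_num
  have hright := onesided g c v (Gc c) hcv' hgcont hgconc hg0 hgM hgv
  -- transfer reflection integrals
  have htrans1 : (∫ x in c..v, g x) = ∫ x in c..v, Gc x := by
    have h := intervalIntegral.integral_comp_sub_left (a := c) (b := v) (f := Gc) (c + v)
    rw [show c + v - v = c by ring, show c + v - c = v by ring] at h
    simpa only [hgdef] using h
  have htrans2 : (∫ x in c..v, (g x) ^ 2) = ∫ x in c..v, (Gc x) ^ 2 := by
    have h := intervalIntegral.integral_comp_sub_left (a := c) (b := v)
      (f := fun t => (Gc t) ^ 2) (c + v)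
    rw [show c + v - v = c by ring, show c + v - c = v by ring] at h
    simpa only [hgdef] using h
  rw [htrans1, htrans2] at hright
  -- sum the two pieces
  have hi1 : IntervalIntegrable Gc volume u c := hGcont.intervalIntegrable u c
  have hi2 : IntervalIntegrable Gc volume c v := hGcont.intervalIntegrable c v
  have hi3 : IntervalIntegrable (fun x => (Gc x) ^ 2) volume u c :=
    (by fun_prop : Continuous fun x => (Gc x) ^ 2).intervalIntegrable u c
  have hi4 : IntervalIntegrable (fun x => (Gc x) ^ 2) volume c v :=
    (by fun_prop : Continuous fun x => (Gc x) ^ 2).intervalIntegrable c v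
  have hadd1 : (∫ x in u..c, Gc x) + (∫ x in c..v, Gc x) = ∫ x in u..v, Gc x :=
    intervalIntegral.integral_add_adjacent_intervals hi1 hi2
  have hadd2 : (∫ x in u..c, (Gc x) ^ 2) + (∫ x in c..v, (Gc x) ^ 2) =
      ∫ x in u..v, (Gc x) ^ 2 :=
    intervalIntegral.integral_add_adjacent_intervals hi3 hi4
  -- replace Gc by G
  have heqG : (∫ x in u..v, Gc x) = ∫ x in u..v, G x :=
    intervalIntegral.integral_congr (fun x hx => hagree x (by rwa [uIcc_of_le huv.le] at hx))
  have heqG2 : (∫ x in u..v, (Gc x) ^ 2) = ∫ x in u..v, (G x) ^ 2 :=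
    intervalIntegral.integral_congr (fun x hx => by
      rw [hagree x (by rwa [uIcc_of_le huv.le] at hx)])
  have hcombined : 3 * (∫ x in u..v, (G x) ^ 2) ≤
      4 * Gc c * (∫ x in u..v, G x) - (Gc c) ^ 2 * (v - u) := by
    rw [← heqG, ← heqG2, ← hadd1, ← hadd2]
    nlinarith [hleft, hright]
  -- AM-GM step
  have hL0 : (0:ℝ) < v - u := by linarith
  have hS0 : 0 ≤ ∫ x in u..v, G x := by
    apply intervalIntegral.integral_nonneg huv.le
    intro x hx
    exact hpos x (hsub' hx)
  have hamgm : 4 * Gc c * (∫ x in u..v, G x) - (Gc c) ^ 2 * (v - u) ≤ 4 / (v - u) := by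
    rw [le_div_iff₀ hL0]
    nlinarith [sq_nonneg (2 * (∫ x in u..v, G x) - Gc c * (v - u)), hS1, hS0]
  have hfin : 3 * (∫ x in u..v, (G x) ^ 2) ≤ 4 / (v - u) := hcombined.trans hamgm
  rw [le_div_iff₀ (by linarith : (0:ℝ) < 3 * (v - u))]
  have h2 := mul_le_mul_of_nonneg_right hfin hL0.le
  rw [div_mul_cancel₀ _ hL0.ne'] at h2
  nlinarith [h2]

set_option maxHeartbeats 1000000 in
/-- For every nonnegative concave `G : [0,1] → ℝ` with `∫_0^1 G = 1`, one has
`∫_0^1 G² ≤ 4/3`, the value attained by `G(x) = 2x`. -/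
theorem stmt13 (G : ℝ → ℝ) (hconc : ConcaveOn ℝ (Set.Icc 0 1) G)
    (hpos : ∀ x ∈ Set.Icc (0 : ℝ) 1, 0 ≤ G x)
    (hint : ∫ x in (0 : ℝ)..1, G x = 1) :
    ∫ x in (0 : ℝ)..1, (G x) ^ 2 ≤ 4 / 3 := by
  by_cases hint2 : IntervalIntegrable (fun x => (G x) ^ 2) volume 0 1
  swap
  · rw [intervalIntegral.integral_undef hint2]; norm_num
  have hGint : IntervalIntegrable G volume 0 1 := by
    by_contra h
    rw [intervalIntegral.integral_undef h] at hint
    norm_num at hint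
  -- pointwise bound G ≤ 2 * G (1/2)
  set C : ℝ := 2 * G (1/2) with hC
  have hC0 : 0 ≤ C := by
    have := hpos (1/2) (by norm_num)
    rw [hC]; linarith
  have hbound : ∀ x ∈ Icc (0:ℝ) 1, G x ≤ C := by
    intro x hx
    rcases le_or_gt x (1/2) with h | h
    · -- 1/2 = t • x + (1-t) • 1 with t = (1/2)/(1-x)
      rcases eq_or_lt_of_le hx.2 with rfl | hx1
      · -- x = 1 but x ≤ 1/2 : contradiction
        norm_num at h
      have h1x : (0:ℝ) < 1 - x := by linarith
      have ht0 : 0 ≤ (1/2) / (1 - x) := by positivity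
      have ht1 : (1/2) / (1 - x) ≤ 1 := by
        rw [div_le_one h1x]; linarith
      have hcomb := hconc.2 hx (right_mem_Icc.2 (by norm_num : (0:ℝ) ≤ 1)) ht0
        (by linarith : (0:ℝ) ≤ 1 - (1/2) / (1 - x)) (by ring)
      have hpt : ((1/2) / (1 - x)) • x + (1 - (1/2) / (1 - x)) • (1:ℝ) = 1/2 := by
        simp only [smul_eq_mul]
        field_simp
        ring
      rw [hpt] at hcomb
      simp only [smul_eq_mul] at hcomb
      have hG1 : 0 ≤ G 1 := hpos 1 (by norm_num)
      have hhalf : (1:ℝ)/2 ≤ (1/2) / (1 - x) := by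
        rw [le_div_iff₀ h1x]; linarith [hx.1]
      nlinarith [hpos x hx, hcomb]
    · rcases eq_or_lt_of_le hx.1 with h0 | hx0
      · exfalso; rw [← h0] at h; norm_num at h
      have ht0 : 0 ≤ 1 - (1/2) / x := by
        have : (1/2) / x ≤ 1 := by rw [div_le_one hx0]; linarith
        linarith
      have ht1 : (1/2) / x ≤ 1 := by rw [div_le_one hx0]; linarith
      have htpos : 0 ≤ (1/2) / x := by positivity
      have hcomb := hconc.2 (left_mem_Icc.2 (by norm_num : (0:ℝ) ≤ 1)) hx ht0 htpos
        (by ring)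
      have hpt : (1 - (1/2) / x) • (0:ℝ) + ((1/2) / x) • x = 1/2 := by
        simp only [smul_eq_mul]
        field_simp
        ring
      rw [hpt] at hcomb
      simp only [smul_eq_mul] at hcomb
      have hG0 : 0 ≤ G 0 := hpos 0 (by norm_num)
      have hhalf : (1:ℝ)/2 ≤ (1/2) / x := by
        rw [le_div_iff₀ hx0]; linarith [hx.2]
      nlinarith [hpos x hx, hcomb]
  -- epsilon argument
  have hmain : ∀ ε : ℝ, 0 < ε → ε ≤ 1/4 →
      (∫ x in (0:ℝ)..1, (G x) ^ 2) ≤ 4 / (3 * (1 - 2*ε)) + 2 * ε * C ^ 2 := by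
    intro ε hε0 hε4
    have he1 : ε < 1 - ε := by linarith
    have hsq1 : IntervalIntegrable (fun x => (G x) ^ 2) volume 0 ε := by
      apply hint2.mono_set
      rw [uIcc_of_le (by linarith), uIcc_of_le (by norm_num : (0:ℝ) ≤ 1)]
      exact Icc_subset_Icc le_rfl (by linarith)
    have hsq2 : IntervalIntegrable (fun x => (G x) ^ 2) volume ε (1 - ε) := by
      apply hint2.mono_set
      rw [uIcc_of_le (by linarith), uIcc_of_le (by norm_num : (0:ℝ) ≤ 1)]
      exact Icc_subset_Icc (by linarith) (by linarith)
    have hsq3 : IntervalIntegrable (fun x => (G x) ^ 2) volume (1 - ε) 1 := by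
      apply hint2.mono_set
      rw [uIcc_of_le (by linarith), uIcc_of_le (by norm_num : (0:ℝ) ≤ 1)]
      exact Icc_subset_Icc (by linarith) le_rfl
    have hGi1 : IntervalIntegrable G volume 0 ε := by
      apply hGint.mono_set
      rw [uIcc_of_le (by linarith), uIcc_of_le (by norm_num : (0:ℝ) ≤ 1)]
      exact Icc_subset_Icc le_rfl (by linarith)
    have hGi2 : IntervalIntegrable G volume ε (1 - ε) := by
      apply hGint.mono_set
      rw [uIcc_of_le (by linarith), uIcc_of_le (by norm_num : (0:ℝ) ≤ 1)]
      exact Icc_subset_Icc (by linarith) (by linarith)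
    have hGi3 : IntervalIntegrable G volume (1 - ε) 1 := by
      apply hGint.mono_set
      rw [uIcc_of_le (by linarith), uIcc_of_le (by norm_num : (0:ℝ) ≤ 1)]
      exact Icc_subset_Icc (by linarith) le_rfl
    -- split of G integral and nonnegativity of tails
    have hsplitG : (∫ x in (0:ℝ)..ε, G x) + (∫ x in ε..(1-ε), G x) +
        (∫ x in (1-ε)..1, G x) = 1 := by
      rw [intervalIntegral.integral_add_adjacent_intervals hGi1 hGi2]
      rw [intervalIntegral.integral_add_adjacent_intervals (hGi1.trans hGi2) hGi3]
      exact hint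
    have htail1 : 0 ≤ ∫ x in (0:ℝ)..ε, G x := by
      apply intervalIntegral.integral_nonneg (by linarith)
      intro x hx
      exact hpos x ⟨hx.1, by linarith [hx.2]⟩
    have htail2 : 0 ≤ ∫ x in (1-ε)..1, G x := by
      apply intervalIntegral.integral_nonneg (by linarith)
      intro x hx
      exact hpos x ⟨by linarith [hx.1], hx.2⟩
    have hmid1 : (∫ x in ε..(1-ε), G x) ≤ 1 := by linarith
    -- middle piece
    have hmid := middle G hconc hpos ε (1-ε) hε0 he1 (by linarith) hmid1
    -- tail bounds for squares
    have htb1 : (∫ x in (0:ℝ)..ε, (G x) ^ 2) ≤ ε * C ^ 2 := by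
      have h := intervalIntegral.integral_mono_on (by linarith : (0:ℝ) ≤ ε) hsq1
        _root_.intervalIntegrable_const
        (fun x hx => by
          have hx1 : x ∈ Icc (0:ℝ) 1 := ⟨hx.1, by linarith [hx.2]⟩
          exact pow_le_pow_left₀ (hpos x hx1) (hbound x hx1) 2)
      rw [intervalIntegral.integral_const, smul_eq_mul] at h
      linarith [h]
    have htb3 : (∫ x in (1-ε)..1, (G x) ^ 2) ≤ ε * C ^ 2 := by
      have h := intervalIntegral.integral_mono_on (by linarith : 1 - ε ≤ 1) hsq3
        _root_.intervalIntegrable_const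
        (fun x hx => by
          have hx1 : x ∈ Icc (0:ℝ) 1 := ⟨by linarith [hx.1], hx.2⟩
          exact pow_le_pow_left₀ (hpos x hx1) (hbound x hx1) 2)
      rw [intervalIntegral.integral_const, smul_eq_mul] at h
      have : (1 - (1 - ε)) = ε := by ring
      rw [this] at h
      linarith [h]
    have hsplitsq : (∫ x in (0:ℝ)..ε, (G x) ^ 2) + (∫ x in ε..(1-ε), (G x) ^ 2) +
        (∫ x in (1-ε)..1, (G x) ^ 2) = ∫ x in (0:ℝ)..1, (G x) ^ 2 := by
      rw [intervalIntegral.integral_add_adjacent_intervals hsq1 hsq2]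
      rw [intervalIntegral.integral_add_adjacent_intervals (hsq1.trans hsq2) hsq3]
    have hlen : (1 - ε) - ε = 1 - 2*ε := by ring
    rw [hlen] at hmid
    linarith [hmid, htb1, htb3, hsplitsq]
  -- conclude
  by_contra hcon
  push_neg at hcon
  set I := ∫ x in (0:ℝ)..1, (G x) ^ 2 with hI
  set δ := I - 4/3 with hδ
  have hδ0 : 0 < δ := by rw [hδ]; linarith
  set ε := min (1/4) (δ / (16/3 + 2 * C ^ 2 + 1)) with hε
  have hden : (0:ℝ) < 16/3 + 2 * C ^ 2 + 1 := by positivity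
  have hε0 : 0 < ε := by
    apply lt_min (by norm_num)
    positivity
  have hε4 : ε ≤ 1/4 := min_le_left _ _
  have hεδ : ε ≤ δ / (16/3 + 2 * C ^ 2 + 1) := min_le_right _ _
  have h1 := hmain ε hε0 hε4
  have h2ε : (0:ℝ) < 1 - 2*ε := by linarith
  have hfrac : 4 / (3 * (1 - 2*ε)) ≤ 4/3 + (16/3) * ε := by
    rw [div_le_iff₀ (by linarith : (0:ℝ) < 3 * (1 - 2*ε))]
    nlinarith [hε0, hε4]
  have hgain : ε * (16/3 + 2 * C ^ 2) < δ := by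
    have h3 : ε * (16/3 + 2 * C ^ 2 + 1) ≤ δ := by
      have := mul_le_mul_of_nonneg_right hεδ hden.le
      rwa [div_mul_cancel₀ _ hden.ne'] at this
    nlinarith [hε0]
  have : I ≤ 4/3 + (16/3) * ε + 2 * ε * C ^ 2 := by linarith [h1, hfrac]
  have : I < 4/3 + δ := by nlinarith [hgain]
  rw [hδ] at this
  linarith
end

section
/- For s ∈ [0,1], let M_s : [0,1] → ℝ be the unit mountain function with apex at (s,2): M_s(x) = 2x/s for x ∈ [0,s] and M_s(x) = 2(1−x)/(1−s) for x ∈ [s,1] (with M_0(x) = 2(1−x) and M_1(x) = 2x). Then every piecewise-affine concave function G : [0,1] → [0,∞) with ∫_0^1 G(x) dx = 1 can be written as a finite convex combination of unit mountains: there exist m ≥ 1, distinct points s_1, …, s_m ∈ [0,1], and reals λ_1, …, λ_m > 0 with Σ_i λ_i = 1, such that G(x) = Σ_{i=1}^m λ_i·M_{s_i}(x) for all x ∈ [0,1]. -/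
open Set

/-- The unit mountain function with apex `(s, 2)`: its graph over `[0,1]` bounds the
triangle with vertices `(0,0)`, `(1,0)`, `(s,2)` (with `M_0(x) = 2(1-x)` and
`M_1(x) = 2x`). -/
noncomputable def mountainFn (s x : ℝ) : ℝ :=
  if s = 0 then 2 * (1 - x)
  else if s = 1 then 2 * x
  else if x ≤ s then 2 * x / s
  else 2 * (1 - x) / (1 - s)

lemma mountain_left {s x : ℝ} (h0 : 0 < s) (h1 : s ≤ 1) (hx : x ≤ s) :
    mountainFn s x = 2 * x / s := by
  unfold mountainFn
  rw [if_neg h0.ne']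
  by_cases hs1 : s = 1
  · subst hs1; simp
  · rw [if_neg hs1, if_pos hx]

lemma mountain_right {s x : ℝ} (h0 : 0 ≤ s) (h1 : s < 1) (hx : s ≤ x) :
    mountainFn s x = 2 * (1 - x) / (1 - s) := by
  unfold mountainFn
  by_cases hs0 : s = 0
  · subst hs0; simp
  · rw [if_neg hs0, if_neg h1.ne]
    by_cases hxs : x ≤ s
    · have : x = s := le_antisymm hxs hx
      subst this
      rw [if_pos le_rfl]
      have hx0 : x ≠ 0 := hs0
      have hx1 : (1:ℝ) - x ≠ 0 := sub_ne_zero.2 (by intro h; exact h1.ne h.symm)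
      field_simp
    · rw [if_neg hxs]

lemma mountain_continuous {s : ℝ} (h0 : 0 ≤ s) (h1 : s ≤ 1) :
    Continuous (mountainFn s) := by
  unfold mountainFn
  by_cases hs0 : s = 0
  · simp only [if_pos hs0]; fun_prop
  by_cases hs1 : s = 1
  · simp only [if_neg hs0, if_pos hs1]; fun_prop
  simp only [if_neg hs0, if_neg hs1]
  apply Continuous.if_le (by fun_prop) (by fun_prop) continuous_id continuous_const
  intro x hx
  subst hx
  have hx0 : x ≠ 0 := hs0
  have hx1 : (1:ℝ) - x ≠ 0 := sub_ne_zero.2 fun h => hs1 h.symm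
  field_simp
  rfl

lemma mountain_integral {s : ℝ} (h0 : 0 ≤ s) (h1 : s ≤ 1) :
    ∫ x in (0:ℝ)..1, mountainFn s x = 1 := by
  by_cases hs0 : s = 0
  · subst hs0
    have : ∀ x ∈ uIcc (0:ℝ) 1, mountainFn 0 x = 2 * (1 - x) := by
      intro x hx; simp [mountainFn]
    rw [intervalIntegral.integral_congr this]
    rw [intervalIntegral.integral_const_mul,
      intervalIntegral.integral_sub intervalIntegrable_const intervalIntegral.intervalIntegrable_id]
    simp [integral_id]
    norm_num
  by_cases hs1 : s = 1
  · subst hs1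
    have : ∀ x ∈ uIcc (0:ℝ) 1, mountainFn 1 x = 2 * x := by
      intro x hx; simp [mountainFn]
    rw [intervalIntegral.integral_congr this]
    rw [intervalIntegral.integral_const_mul]
    simp [integral_id]
  have hs0' : 0 < s := lt_of_le_of_ne h0 (Ne.symm hs0)
  have hs1' : s < 1 := lt_of_le_of_ne h1 hs1
  have hi : ∀ u v : ℝ, IntervalIntegrable (mountainFn s) MeasureTheory.volume u v :=
    fun u v => (mountain_continuous h0 h1).intervalIntegrable u v
  rw [← intervalIntegral.integral_add_adjacent_intervals (hi 0 s) (hi s 1)]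
  have e1 : ∫ x in (0:ℝ)..s, mountainFn s x = ∫ x in (0:ℝ)..s, (2/s) * x := by
    apply intervalIntegral.integral_congr
    intro x hx
    rw [uIcc_of_le h0] at hx
    rw [mountain_left hs0' h1 hx.2]
    ring
  have e2 : ∫ x in s..(1:ℝ), mountainFn s x = ∫ x in s..(1:ℝ), (2/(1-s)) * (1 - x) := by
    apply intervalIntegral.integral_congr
    intro x hx
    rw [uIcc_of_le h1] at hx
    rw [mountain_right h0 hs1' hx.1]
    ring
  rw [e1, e2, intervalIntegral.integral_const_mul, intervalIntegral.integral_const_mul,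
    intervalIntegral.integral_sub intervalIntegrable_const intervalIntegral.intervalIntegrable_id]
  simp only [integral_id, intervalIntegral.integral_const, smul_eq_mul]
  have : (1:ℝ) - s ≠ 0 := sub_ne_zero.2 fun h => hs1 h.symm
  field_simp
  ring


lemma tele1 (A c g : ℕ → ℝ) (k : ℕ) (hA0 : A 0 = 0)
    (hg : ∀ j < k, g (j+1) = g j + c j * (A (j+1) - A j)) :
    ∀ i < k, ∑ j ∈ Finset.range i, (c j - c (j+1)) * A (j+1) = g i - g 0 - c i * A i := by
  intro i hi
  induction i with
  | zero => simp [hA0]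
  | succ n ih =>
    rw [Finset.sum_range_succ, ih (by omega), hg n (by omega)]
    ring

lemma tele1' (A c g : ℕ → ℝ) (k : ℕ) (hA0 : A 0 = 0)
    (hg : ∀ j < k, g (j+1) = g j + c j * (A (j+1) - A j)) :
    ∀ i < k, ∑ j ∈ Finset.range i, (c j - c (j+1)) * (1 - A (j+1))
      = (c 0 - c i) - (g i - g 0 - c i * A i) := by
  intro i hi
  have h1 : ∑ j ∈ Finset.range i, (c j - c (j+1)) * (1 - A (j+1))
      = (∑ j ∈ Finset.range i, (c j - c (j+1)))
        - ∑ j ∈ Finset.range i, (c j - c (j+1)) * A (j+1) := by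
    rw [← Finset.sum_sub_distrib]
    apply Finset.sum_congr rfl
    intros; ring
  rw [h1, Finset.sum_range_sub' c, tele1 A c g k hA0 hg i hi]

lemma tele2 (A c g : ℕ → ℝ) (k : ℕ) (hk : 1 ≤ k) (hA0 : A 0 = 0) (hAk : A k = 1)
    (hg : ∀ j < k, g (j+1) = g j + c j * (A (j+1) - A j)) :
    ∀ i < k, ∑ j ∈ Finset.Ico (i+1) k, (c (j-1) - c j) * (1 - A j)
      = c i * (1 - A i) + g i - g k := by
  intro i hi
  have reindex : ∀ n, n ≤ k → ∑ j ∈ Finset.Ico 1 (n+1), (c (j-1) - c j) * (1 - A j)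
      = ∑ j ∈ Finset.range n, (c j - c (j+1)) * (1 - A (j+1)) := by
    intro n hn
    rw [Finset.sum_Ico_eq_sum_range]
    apply Finset.sum_congr (by norm_num)
    intro j hj
    have e1 : 1 + j - 1 = j := by omega
    have e2 : 1 + j = j + 1 := by omega
    rw [e1, e2]
  have hsplit : ∑ j ∈ Finset.Ico 1 (i+1), (c (j-1) - c j) * (1 - A j)
      + ∑ j ∈ Finset.Ico (i+1) k, (c (j-1) - c j) * (1 - A j)
      = ∑ j ∈ Finset.Ico 1 k, (c (j-1) - c j) * (1 - A j) :=
    Finset.sum_Ico_consecutive _ (by omega) (by omega)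
  have e : (k-1)+1 = k := by omega
  have hfull : ∑ j ∈ Finset.Ico 1 k, (c (j-1) - c j) * (1 - A j)
      = c 0 + g 0 - g k := by
    have h2 := reindex (k-1) (by omega)
    rw [e] at h2
    rw [h2, tele1' A c g k hA0 hg (k-1) (by omega)]
    have h3 := hg (k-1) (by omega)
    rw [e, hAk] at h3
    have h4 : c (k-1) * (1 - A (k-1)) = c (k-1) - c (k-1) * A (k-1) := by ring
    rw [h4] at h3
    linarith
  have hpart : ∑ j ∈ Finset.Ico 1 (i+1), (c (j-1) - c j) * (1 - A j)
      = (c 0 - c i) - (g i - g 0 - c i * A i) := by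
    rw [reindex i (by omega), tele1' A c g k hA0 hg i hi]
  linarith [hsplit, hfull, hpart]

/-- Every piecewise-affine nonnegative concave function `G` on `[0,1]` with
`∫_0^1 G = 1` is a finite convex combination of unit mountain functions with
distinct apex abscissas in `[0,1]`. -/
theorem stmt14 (G : ℝ → ℝ)
    (hconc : ConcaveOn ℝ (Set.Icc 0 1) G)
    (hpos : ∀ x ∈ Set.Icc (0 : ℝ) 1, 0 ≤ G x)
    (hint : ∫ x in (0 : ℝ)..1, G x = 1)
    (hpw : ∃ (k : ℕ) (a : Fin (k + 1) → ℝ), StrictMono a ∧ a 0 = 0 ∧ a (Fin.last k) = 1 ∧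
      ∀ i : Fin k, ∃ c b : ℝ, ∀ x ∈ Set.Icc (a i.castSucc) (a i.succ), G x = c * x + b) :
    ∃ (m : ℕ) (s : Fin m → ℝ) (lam : Fin m → ℝ),
      1 ≤ m ∧ Function.Injective s ∧ (∀ i, s i ∈ Set.Icc (0 : ℝ) 1) ∧
      (∀ i, 0 < lam i) ∧ (∑ i, lam i = 1) ∧
      ∀ x ∈ Set.Icc (0 : ℝ) 1, G x = ∑ i, lam i * mountainFn (s i) x := by
  classical
  obtain ⟨k, a, ha, ha0, hak, hpiece⟩ := hpw
  choose cc bb hcb using hpiece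
  -- k ≥ 1
  have hk : 1 ≤ k := by
    by_contra h
    push_neg at h
    interval_cases k
    rw [show Fin.last 0 = 0 from rfl, ha0] at hak
    norm_num at hak
  -- the nodes, extended to ℕ
  set A : ℕ → ℝ := fun j => if h : j ≤ k then a ⟨j, by omega⟩ else 1 with hA
  have hAle : ∀ j (h : j ≤ k), A j = a ⟨j, by omega⟩ := fun j h => dif_pos h
  have hA0' : A 0 = 0 := by
    rw [hAle 0 (by omega), show (⟨0, by omega⟩ : Fin (k+1)) = 0 from rfl, ha0]
  have hAk' : A k = 1 := by
    rw [hAle k le_rfl, show (⟨k, by omega⟩ : Fin (k+1)) = Fin.last k from rfl, hak]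
  have hAmono : ∀ p q : ℕ, p < q → q ≤ k → A p < A q := by
    intro p q h hq
    rw [hAle p (by omega), hAle q hq]
    exact ha (by simp [Fin.lt_def]; omega)
  have hAmono' : ∀ p q : ℕ, p ≤ q → q ≤ k → A p ≤ A q := by
    intro p q h hq
    rcases eq_or_lt_of_le h with rfl | h
    · exact le_rfl
    · exact (hAmono p q h hq).le
  have hArange : ∀ j, j ≤ k → A j ∈ Set.Icc (0:ℝ) 1 := by
    intro j hj
    constructor
    · rw [← hA0']; exact hAmono' 0 j (by omega) hj
    · rw [← hAk']; exact hAmono' j k hj le_rfl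
  -- values and slopes
  set g : ℕ → ℝ := fun j => G (A j) with hgdef
  have hgj : ∀ j, g j = G (A j) := fun _ => rfl
  set c : ℕ → ℝ := fun j => if h : j < k then cc ⟨j, h⟩ else 0 with hc
  -- the piece formula in ℕ-indexed form
  have hpieceN : ∀ j (h : j < k), ∀ x ∈ Set.Icc (A j) (A (j+1)),
      G x = c j * x + (g j - c j * A j) := by
    intro j h x hx
    have hcs : A j = a (⟨j, h⟩ : Fin k).castSucc := by
      rw [hAle j (by omega)]; congr 1
    have hsc : A (j+1) = a (⟨j, h⟩ : Fin k).succ := by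
      rw [hAle (j+1) (by omega)]; congr 1
    have hcj : c j = cc ⟨j, h⟩ := dif_pos h
    have h1 := hcb ⟨j, h⟩ x (by rwa [← hcs, ← hsc])
    have h2 := hcb ⟨j, h⟩ (A j) (by
      rw [← hcs, ← hsc]
      exact ⟨le_rfl, hAmono' j (j+1) (by omega) (by omega)⟩)
    rw [hgj, hcj, h1, h2]
    ring
  have hg : ∀ j, j < k → g (j+1) = g j + c j * (A (j+1) - A j) := by
    intro j h
    have h1 := hpieceN j h (A (j+1)) ⟨hAmono' j (j+1) (by omega) (by omega), le_rfl⟩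
    rw [hgj (j+1), hgj j]
    rw [hgj j] at h1
    rw [h1]
    ring
  -- slopes are antitone
  have hcmono : ∀ j, 1 ≤ j → j < k → c j ≤ c (j-1) := by
    intro j h1 h2
    have hd1 : A (j-1) < A j := hAmono (j-1) j (by omega) (by omega)
    have hd2 : A j < A (j+1) := hAmono j (j+1) (by omega) (by omega)
    have hslope := hconc.slope_anti_adjacent (hArange (j-1) (by omega))
      (hArange (j+1) (by omega)) hd1 hd2
    have e2 : (G (A (j+1)) - G (A j)) / (A (j+1) - A j) = c j := by
      have := hg j h2
      rw [hgj (j+1), hgj j] at this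
      rw [this]
      have hne : A (j+1) - A j ≠ 0 := by linarith
      field_simp
      ring
    have e1 : (G (A j) - G (A (j-1))) / (A j - A (j-1)) = c (j-1) := by
      have := hg (j-1) (by omega)
      rw [show (j-1)+1 = j from by omega, hgj j, hgj (j-1)] at this
      rw [this]
      have hne : A j - A (j-1) ≠ 0 := by linarith
      field_simp
      ring
    rw [e2, e1] at hslope
    exact hslope
  -- the weights
  set lam0 : ℕ → ℝ := fun j => if j = 0 then g 0 / 2 else if j = k then g k / 2
    else (c (j-1) - c j) * A j * (1 - A j) / 2 with hlam0
  have lam0_0 : lam0 0 = g 0 / 2 := if_pos rfl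
  have lam0_k : lam0 k = g k / 2 := by
    show (if k = 0 then g 0 / 2 else if k = k then g k / 2
      else (c (k-1) - c k) * A k * (1 - A k) / 2) = g k / 2
    rw [if_neg (by omega), if_pos rfl]
  have lam0_mid : ∀ j, j ≠ 0 → j ≠ k → lam0 j = (c (j-1) - c j) * A j * (1 - A j) / 2 := by
    intro j h0 hk'
    show (if j = 0 then g 0 / 2 else if j = k then g k / 2
      else (c (j-1) - c j) * A j * (1 - A j) / 2) = _
    rw [if_neg h0, if_neg hk']
  have hlamnn : ∀ j, 0 ≤ lam0 j := by
    intro j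
    by_cases hj0 : j = 0
    · subst hj0; rw [lam0_0]
      have := hpos (A 0) (hArange 0 (by omega))
      rw [← hgj 0] at this; linarith
    by_cases hjk : j = k
    · rw [hjk, lam0_k]
      have := hpos (A k) (hArange k le_rfl)
      rw [← hgj k] at this; linarith
    rw [lam0_mid j hj0 hjk]
    by_cases hjk' : j ≤ k
    · have hjk2 : j < k := by omega
      have h1 : 0 ≤ c (j-1) - c j := sub_nonneg.2 (hcmono j (by omega) hjk2)
      have h2 : 0 < A j := by rw [← hA0']; exact hAmono 0 j (by omega) (by omega)
      have h3 : A j < 1 := by rw [← hAk']; exact hAmono j k hjk2 le_rfl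
      have : 0 ≤ (c (j-1) - c j) * A j * (1 - A j) :=
        mul_nonneg (mul_nonneg h1 h2.le) (by linarith)
      linarith
    · have hA1 : A j = 1 := dif_neg hjk'
      rw [hA1]
      ring_nf
      exact le_rfl
  -- every x in [0,1] lies in some piece
  have hfind : ∀ x ∈ Set.Icc (0:ℝ) 1, ∃ i, i < k ∧ A i ≤ x ∧ x ≤ A (i+1) := by
    intro x hx
    by_cases hx1 : A k ≤ x
    · refine ⟨k-1, by omega, ?_, ?_⟩
      · exact le_trans (hAmono' (k-1) k (by omega) le_rfl) hx1
      · rw [show (k-1)+1 = k from by omega, hAk']; exact hx.2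
    · push_neg at hx1
      have hP0 : A 0 ≤ x := by rw [hA0']; exact hx.1
      have hPi : A (Nat.findGreatest (fun j => A j ≤ x) k) ≤ x :=
        Nat.findGreatest_spec (P := fun j => A j ≤ x) (Nat.zero_le k) hP0
      have hik : Nat.findGreatest (fun j => A j ≤ x) k ≤ k := Nat.findGreatest_le k
      have hiklt : Nat.findGreatest (fun j => A j ≤ x) k < k := by
        rcases eq_or_lt_of_le hik with he | h
        · rw [he] at hPi; linarith
        · exact h
      refine ⟨Nat.findGreatest (fun j => A j ≤ x) k, hiklt, hPi, ?_⟩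
      have := Nat.findGreatest_is_greatest
        (show Nat.findGreatest (fun j => A j ≤ x) k < Nat.findGreatest (fun j => A j ≤ x) k + 1
          from by omega) (by omega)
      push_neg at this
      exact this.le
  -- the main pointwise identity
  have hmain : ∀ x ∈ Set.Icc (0:ℝ) 1,
      G x = ∑ j ∈ Finset.range (k+1), lam0 j * mountainFn (A j) x := by
    intro x hx
    obtain ⟨i, hik, hxl, hxr⟩ := hfind x hx
    have hsplit : ∑ j ∈ Finset.range (k+1), lam0 j * mountainFn (A j) x
        = (∑ j ∈ Finset.Ico 0 (i+1), lam0 j * mountainFn (A j) x)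
          + ∑ j ∈ Finset.Ico (i+1) (k+1), lam0 j * mountainFn (A j) x := by
      rw [Finset.range_eq_Ico, ← Finset.sum_Ico_consecutive _ (by omega : 0 ≤ i+1) (by omega : i+1 ≤ k+1)]
    -- left part
    have hL : ∑ j ∈ Finset.Ico 0 (i+1), lam0 j * mountainFn (A j) x
        = (g i - g 0 - c i * A i) * (1-x) + g 0 * (1-x) := by
      have step1 : ∑ j ∈ Finset.Ico 0 (i+1), lam0 j * mountainFn (A j) x
          = ∑ j ∈ Finset.Ico 0 (i+1),
              (if j = 0 then g 0 else (c (j-1) - c j) * A j) * (1-x) := by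
        apply Finset.sum_congr rfl
        intro j hj
        rw [Finset.mem_Ico] at hj
        have hji : j ≤ i := by omega
        have hjk2 : j < k := by omega
        have hAj1 : A j < 1 := by rw [← hAk']; exact hAmono j k hjk2 le_rfl
        have hAj0 : 0 ≤ A j := (hArange j (by omega)).1
        have hAjx : A j ≤ x := le_trans (hAmono' j i hji (by omega)) hxl
        rw [mountain_right hAj0 hAj1 hAjx]
        by_cases hj0 : j = 0
        · subst hj0
          rw [lam0_0, if_pos rfl, hA0']
          ring
        · rw [lam0_mid j hj0 (by omega), if_neg hj0]
          have hne : (1:ℝ) - A j ≠ 0 := by intro h; linarith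
          field_simp
      rw [step1]
      rw [show Finset.Ico 0 (i+1) = Finset.range (i+1) from by rw [Finset.range_eq_Ico]]
      rw [Finset.sum_range_succ']
      have hterm : ∀ j, (if j + 1 = 0 then g 0 else (c (j+1-1) - c (j+1)) * A (j+1)) * (1 - x)
          = ((c j - c (j+1)) * A (j+1)) * (1-x) := by
        intro j
        rw [if_neg (by omega), Nat.add_sub_cancel]
      simp only [hterm]
      rw [← Finset.sum_mul, tele1 A c g k hA0' hg i hik]
      norm_num
    -- right part
    have hR : ∑ j ∈ Finset.Ico (i+1) (k+1), lam0 j * mountainFn (A j) x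
        = (c i * (1 - A i) + g i - g k) * x + g k * x := by
      have step1 : ∑ j ∈ Finset.Ico (i+1) (k+1), lam0 j * mountainFn (A j) x
          = ∑ j ∈ Finset.Ico (i+1) (k+1),
              (if j = k then g k else (c (j-1) - c j) * (1 - A j)) * x := by
        apply Finset.sum_congr rfl
        intro j hj
        rw [Finset.mem_Ico] at hj
        have hj1 : 1 ≤ j := by omega
        have hjk2 : j ≤ k := by omega
        have hAj0 : 0 < A j := by rw [← hA0']; exact hAmono 0 j (by omega) hjk2
        have hAj1 : A j ≤ 1 := (hArange j hjk2).2
        have hxAj : x ≤ A j := le_trans hxr (hAmono' (i+1) j (by omega) hjk2)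
        rw [mountain_left hAj0 hAj1 hxAj]
        by_cases hjk3 : j = k
        · subst hjk3
          rw [lam0_k, if_pos rfl, hAk']
          ring
        · rw [lam0_mid j (by omega) hjk3, if_neg hjk3]
          have hne : A j ≠ 0 := hAj0.ne'
          field_simp
      rw [step1]
      rw [Finset.sum_Ico_succ_top (by omega : i+1 ≤ k), if_pos rfl]
      have step2 : ∑ j ∈ Finset.Ico (i+1) k,
          (if j = k then g k else (c (j-1) - c j) * (1 - A j)) * x
          = ∑ j ∈ Finset.Ico (i+1) k, ((c (j-1) - c j) * (1 - A j)) * x := by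
        apply Finset.sum_congr rfl
        intro j hj
        rw [Finset.mem_Ico] at hj
        rw [if_neg (by omega)]
      rw [step2, ← Finset.sum_mul, tele2 A c g k hk hA0' hAk' hg i hik]
    rw [hsplit, hL, hR, hpieceN i hik x ⟨hxl, hxr⟩]
    ring
  -- the sum of weights is 1
  have hs1 : ∑ j ∈ Finset.range (k+1), lam0 j = 1 := by
    have hInt : ∀ j ∈ Finset.range (k+1), IntervalIntegrable
        (fun x => lam0 j * mountainFn (A j) x) MeasureTheory.volume 0 1 := by
      intro j hj
      rw [Finset.mem_range] at hj
      have hr := hArange j (by omega)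
      exact (continuous_const.mul (mountain_continuous hr.1 hr.2)).intervalIntegrable 0 1
    have hGint : ∫ x in (0:ℝ)..1, G x = ∫ x in (0:ℝ)..1, ∑ j ∈ Finset.range (k+1),
        lam0 j * mountainFn (A j) x := by
      apply intervalIntegral.integral_congr
      intro x hxx
      rw [Set.uIcc_of_le (by norm_num : (0:ℝ) ≤ 1)] at hxx
      exact hmain x hxx
    rw [hint, intervalIntegral.integral_finset_sum hInt] at hGint
    rw [hGint]
    apply Finset.sum_congr rfl
    intro j hj
    rw [Finset.mem_range] at hj
    have hr := hArange j (by omega)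
    rw [intervalIntegral.integral_const_mul, mountain_integral hr.1 hr.2, mul_one]
  -- extract the support
  set S : Finset ℕ := (Finset.range (k+1)).filter (fun j => lam0 j ≠ 0) with hS
  have hSle : ∀ j ∈ S, j ≤ k := by
    intro j hj
    rw [hS, Finset.mem_filter, Finset.mem_range] at hj
    omega
  have hSne : ∀ j ∈ S, lam0 j ≠ 0 := by
    intro j hj
    rw [hS, Finset.mem_filter] at hj
    exact hj.2
  have hfilter : ∀ (f : ℕ → ℝ), (∀ j, lam0 j = 0 → f j = 0) →
      ∑ j ∈ S, f j = ∑ j ∈ Finset.range (k+1), f j := by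
    intro f hf
    rw [hS]
    apply Finset.sum_filter_of_ne
    intro j _ hfj
    intro hl
    exact hfj (hf j hl)
  set m := S.card with hm
  set e := S.orderIsoOfFin rfl with he
  have hsumS : ∀ (f : ℕ → ℝ), ∑ i : Fin m, f (e i) = ∑ j ∈ S, f j := by
    intro f
    rw [← Finset.sum_coe_sort S f]
    exact Fintype.sum_equiv e.toEquiv _ _ (fun i => rfl)
  have hAinj : ∀ p q : ℕ, p ≤ k → q ≤ k → A p = A q → p = q := by
    intro p q hp hq hpq
    rcases lt_trichotomy p q with h | h | h
    · exact absurd hpq (hAmono p q h hq).ne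
    · exact h
    · exact absurd hpq.symm (hAmono q p h hp).ne
  refine ⟨m, fun i => A (e i), fun i => lam0 (e i), ?_, ?_, ?_, ?_, ?_, ?_⟩
  · -- 1 ≤ m
    rw [hm, Nat.one_le_iff_ne_zero]
    intro hcard
    have : S = ∅ := Finset.card_eq_zero.mp hcard
    have h0 : ∑ j ∈ S, lam0 j = 1 := by
      rw [hfilter lam0 (fun j hj => hj)]
      exact hs1
    rw [this] at h0
    simp at h0
  · -- injective
    intro i i' hii
    have h1 := hAinj (e i) (e i') (hSle _ (e i).2) (hSle _ (e i').2) hii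
    have h2 : (e i : {x // x ∈ S}) = e i' := Subtype.ext h1
    exact e.injective h2
  · -- range
    intro i
    exact hArange (e i) (hSle _ (e i).2)
  · -- positive
    intro i
    exact lt_of_le_of_ne (hlamnn (e i)) (Ne.symm (hSne _ (e i).2))
  · -- sum = 1
    rw [hsumS lam0, hfilter lam0 (fun j hj => hj)]
    exact hs1
  · -- pointwise
    intro x hx
    rw [hmain x hx, ← hfilter (fun j => lam0 j * mountainFn (A j) x)
      (fun j hj => by
        show lam0 j * mountainFn (A j) x = 0
        rw [hj, zero_mul]), ← hsumS (fun j => lam0 j * mountainFn (A j) x)]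
end
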